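/- For positive integers m and nonnegative integers k, let c_{m,k} be defined by c_{m,0} = 1, c_{m,k} = Σ_{1 ≤ i_1 < i_2 < ⋯ < i_k ≤ m−1} i_1² i_2² ⋯ i_k² for 1 ≤ k ≤ m−1 (the k-th elementary symmetric polynomial of 1², 2², …, (m−1)²), and c_{m,k} = 0 for k ≥ m. Define real polynomials Q_m by Q_0 = Γ(1/2) = √π and the recurrence Q_m(t) = (m − 1/2 + (m−1)² t) Q_{m−1}(t) − t Q'_{m−1}(t) for m ≥ 1. Then for every m ≥ 1, Q_m(t) = Σ_{k=0}^{m−1} Γ(m − k + 1/2) c_{m,k} t^k. -/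

import Mathlib

open Real Finset

/-- `c m k` is the `k`-th elementary symmetric polynomial of `1², 2², …, (m-1)²`:
`c m 0 = 1`, `c m k = Σ_{1 ≤ i₁ < ⋯ < i_k ≤ m-1} i₁²⋯i_k²` for `1 ≤ k ≤ m-1`, and
`c m k = 0` for `k ≥ m`. -/
noncomputable def c (m k : ℕ) : ℝ :=
  ∑ A ∈ (Finset.Icc 1 (m - 1)).powersetCard k, ∏ i ∈ A, (i : ℝ) ^ 2


lemma c_zero (m : ℕ) : c m 0 = 1 := by simp [c]

lemma c_diag (m : ℕ) (hm : 1 ≤ m) : c m m = 0 := by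
  have h : (Finset.Icc 1 (m-1)).card < m := by rw [Nat.card_Icc]; omega
  rw [c, Finset.powersetCard_eq_empty.mpr h, Finset.sum_empty]

lemma c_succ (n k : ℕ) : c (n+1+1) (k+1) = c (n+1) (k+1) + ((n+1 : ℕ) : ℝ)^2 * c (n+1) k := by
  have hnot : (n+1) ∉ Finset.Icc 1 n := by simp
  have h1 : Finset.Icc 1 (n+1) = insert (n+1) (Finset.Icc 1 n) :=
    (Finset.insert_Icc_right_eq_Icc_add_one (by omega)).symm
  have hdisj : Disjoint ((Finset.Icc 1 n).powersetCard (k+1))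
      (((Finset.Icc 1 n).powersetCard k).image (insert (n+1))) := by
    rw [Finset.disjoint_left]
    intro A hA hA'
    obtain ⟨B, hB, rfl⟩ := Finset.mem_image.mp hA'
    exact hnot ((Finset.mem_powersetCard.mp hA).1 (Finset.mem_insert_self _ _))
  have hinj : ∀ A ∈ (Finset.Icc 1 n).powersetCard k, ∀ B ∈ (Finset.Icc 1 n).powersetCard k,
      insert (n+1) A = insert (n+1) B → A = B := by
    intro A hA B hB h
    have hA' : (n+1) ∉ A := fun h => hnot ((Finset.mem_powersetCard.mp hA).1 h)
    have hB' : (n+1) ∉ B := fun h => hnot ((Finset.mem_powersetCard.mp hB).1 h)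
    rw [← Finset.erase_insert hA', ← Finset.erase_insert hB', h]
  simp only [c, Nat.add_sub_cancel]
  rw [h1, Finset.powersetCard_succ_insert hnot, Finset.sum_union hdisj,
    Finset.sum_image hinj]
  congr 1
  rw [Finset.mul_sum]
  refine Finset.sum_congr rfl fun A hA => ?_
  have hA' : (n+1) ∉ A := fun h => hnot ((Finset.mem_powersetCard.mp hA).1 h)
  rw [Finset.prod_insert hA']

lemma c_succ' (n k : ℕ) (hn : 1 ≤ n) :
    c (n+1) (k+1) = c n (k+1) + (n : ℝ)^2 * c n k := by
  obtain ⟨p, rfl⟩ : ∃ p, n = p + 1 := ⟨n - 1, by omega⟩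
  exact_mod_cast c_succ p k

lemma key (n : ℕ) (hn : 1 ≤ n) (t : ℝ) :
    (((n:ℝ)+1) - 1/2 + (n:ℝ)^2 * t) *
        (∑ k ∈ Finset.range n, Real.Gamma ((n:ℝ) - k + 1/2) * c n k * t ^ k)
      - t * (∑ k ∈ Finset.range n,
          Real.Gamma ((n:ℝ) - k + 1/2) * c n k * ((k:ℝ) * t ^ (k-1)))
    = ∑ k ∈ Finset.range (n+1),
        Real.Gamma (((n:ℝ)+1) - k + 1/2) * c (n+1) k * t ^ k := by
  have step1 : ∀ k ∈ Finset.range n,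
      (((n:ℝ)+1) - 1/2) * (Real.Gamma ((n:ℝ)-k+1/2) * c n k * t^k)
        - t * (Real.Gamma ((n:ℝ)-k+1/2) * c n k * ((k:ℝ) * t^(k-1)))
      = Real.Gamma (((n:ℝ)+1) - k + 1/2) * c n k * t^k := by
    intro k hk
    have hk' : (k:ℝ) < n := by exact_mod_cast Finset.mem_range.mp hk
    have hgam : Real.Gamma (((n:ℝ)+1) - k + 1/2)
        = ((n:ℝ) - k + 1/2) * Real.Gamma ((n:ℝ)-k+1/2) := by
      have h1 : ((n:ℝ)+1) - k + 1/2 = ((n:ℝ) - k + 1/2) + 1 := by ring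
      rw [h1, Real.Gamma_add_one (by nlinarith)]
    rw [hgam]
    cases k with
    | zero => norm_num; ring
    | succ j =>
      simp only [Nat.add_sub_cancel]
      push_cast
      ring
  -- left side reorganized
  have lhs_eq : (((n:ℝ)+1) - 1/2 + (n:ℝ)^2 * t) *
        (∑ k ∈ Finset.range n, Real.Gamma ((n:ℝ) - k + 1/2) * c n k * t ^ k)
      - t * (∑ k ∈ Finset.range n,
          Real.Gamma ((n:ℝ) - k + 1/2) * c n k * ((k:ℝ) * t ^ (k-1)))
      = (∑ k ∈ Finset.range n, Real.Gamma (((n:ℝ)+1) - k + 1/2) * c n k * t ^ k)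
        + ∑ k ∈ Finset.range n, (n:ℝ)^2 * (Real.Gamma ((n:ℝ) - k + 1/2) * c n k * t ^ (k+1)) := by
    have e1 : (((n:ℝ)+1) - 1/2) *
          (∑ k ∈ Finset.range n, Real.Gamma ((n:ℝ) - k + 1/2) * c n k * t ^ k)
        - t * (∑ k ∈ Finset.range n,
            Real.Gamma ((n:ℝ) - k + 1/2) * c n k * ((k:ℝ) * t ^ (k-1)))
        = ∑ k ∈ Finset.range n, Real.Gamma (((n:ℝ)+1) - k + 1/2) * c n k * t ^ k := by
      rw [Finset.mul_sum, Finset.mul_sum, ← Finset.sum_sub_distrib]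
      exact Finset.sum_congr rfl step1
    have e2 : (n:ℝ)^2 * t *
          (∑ k ∈ Finset.range n, Real.Gamma ((n:ℝ) - k + 1/2) * c n k * t ^ k)
        = ∑ k ∈ Finset.range n, (n:ℝ)^2 * (Real.Gamma ((n:ℝ) - k + 1/2) * c n k * t ^ (k+1)) := by
      rw [Finset.mul_sum]
      exact Finset.sum_congr rfl fun k _ => by rw [pow_succ]; ring
    rw [← e1, ← e2]; ring
  rw [lhs_eq]
  -- right side reorganized
  rw [Finset.sum_range_succ' (fun k => Real.Gamma (((n:ℝ)+1) - k + 1/2) * c (n+1) k * t ^ k) n]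
  have split : ∀ k ∈ Finset.range n,
      Real.Gamma (((n:ℝ)+1) - (↑(k+1):ℝ) + 1/2) * c (n+1) (k+1) * t ^ (k+1)
      = Real.Gamma ((n:ℝ) - k + 1/2) * c n (k+1) * t ^ (k+1)
        + (n:ℝ)^2 * (Real.Gamma ((n:ℝ) - k + 1/2) * c n k * t ^ (k+1)) := by
    intro k _
    have harg : ((n:ℝ)+1) - (↑(k+1):ℝ) + 1/2 = (n:ℝ) - k + 1/2 := by push_cast; ring
    rw [harg, c_succ' n k hn]
    ring
  rw [Finset.sum_congr rfl split, Finset.sum_add_distrib]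
  have hzero : Real.Gamma (((n:ℝ)+1) - (n:ℝ) + 1/2) * c n n * t ^ n = 0 := by
    rw [c_diag n hn]; ring
  have ext : ∑ k ∈ Finset.range n, Real.Gamma (((n:ℝ)+1) - k + 1/2) * c n k * t ^ k
      = ∑ k ∈ Finset.range (n+1), Real.Gamma (((n:ℝ)+1) - k + 1/2) * c n k * t ^ k := by
    rw [Finset.sum_range_succ, hzero, add_zero]
  have lhs1_eq : ∑ k ∈ Finset.range n, Real.Gamma (((n:ℝ)+1) - k + 1/2) * c n k * t ^ k
      = (∑ k ∈ Finset.range n, Real.Gamma ((n:ℝ) - k + 1/2) * c n (k+1) * t ^ (k+1))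
        + Real.Gamma (((n:ℝ)+1) - (↑(0:ℕ):ℝ) + 1/2) * c (n+1) 0 * t ^ 0 := by
    rw [ext, Finset.sum_range_succ' (fun k => Real.Gamma (((n:ℝ)+1) - k + 1/2) * c n k * t ^ k) n]
    congr 1
    · refine Finset.sum_congr rfl fun k _ => ?_
      have harg : ((n:ℝ)+1) - (↑(k+1):ℝ) + 1/2 = (n:ℝ) - k + 1/2 := by push_cast; ring
      rw [harg]
    · rw [c_zero, c_zero]
  rw [lhs1_eq]
  ring

/-- The polynomials defined by `Q₀ = Γ(1/2)` and the recurrence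
`Q_m(t) = (m - 1/2 + (m-1)² t) Q_{m-1}(t) - t Q'_{m-1}(t)` satisfy
`Q_m(t) = Σ_{k=0}^{m-1} Γ(m-k+1/2) c_{m,k} t^k` for every `m ≥ 1`. -/
theorem hyperbolic_diagonal_polynomials (Q : ℕ → ℝ → ℝ)
    (hQ0 : ∀ t : ℝ, Q 0 t = Real.Gamma (1 / 2))
    (hQrec : ∀ m : ℕ, 1 ≤ m → ∀ t : ℝ,
      Q m t = ((m : ℝ) - 1 / 2 + ((m : ℝ) - 1) ^ 2 * t) * Q (m - 1) t -
        t * deriv (Q (m - 1)) t) :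
    ∀ m : ℕ, 1 ≤ m → ∀ t : ℝ,
      Q m t = ∑ k ∈ Finset.range m, Real.Gamma ((m : ℝ) - (k : ℝ) + 1 / 2) * c m k * t ^ k := by
  intro m hm
  induction m, hm using Nat.le_induction with
  | base =>
    intro t
    have h0 : Q 0 = fun _ => Real.Gamma (1/2) := funext hQ0
    have hd : deriv (Q 0) t = 0 := by rw [h0]; simp
    rw [hQrec 1 le_rfl t]
    simp only [Nat.sub_self] at *
    rw [hd, hQ0, Finset.sum_range_one, c_zero]
    have h32 : ((1:ℕ):ℝ) - ((0:ℕ):ℝ) + 1/2 = (1/2 : ℝ) + 1 := by norm_num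
    rw [h32, Real.Gamma_add_one (by norm_num)]
    push_cast
    ring
  | succ n hn IH =>
    intro t
    have hQn : Q n = fun s => ∑ k ∈ Finset.range n,
        Real.Gamma ((n:ℝ) - (k:ℝ) + 1/2) * c n k * s ^ k := funext IH
    have hder : deriv (Q n) t = ∑ k ∈ Finset.range n,
        Real.Gamma ((n:ℝ) - (k:ℝ) + 1/2) * c n k * ((k:ℝ) * t ^ (k-1)) := by
      rw [hQn]
      exact (HasDerivAt.fun_sum fun k _ =>
        (hasDerivAt_pow k t).const_mul (Real.Gamma ((n:ℝ) - (k:ℝ) + 1/2) * c n k)).deriv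
    have hrec := hQrec (n+1) (by omega) t
    simp only [Nat.add_sub_cancel] at hrec
    rw [hrec, hder, IH t]
    have := key n hn t
    push_cast at this ⊢
    linear_combination this
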